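/- Let p > q > 0 with gcd(p,q) = 1 and suppose q^2 ≡ 1 (mod p). Write the continued fraction expansion p/q = [r_1, r_2, ..., r_n] = r_1 - 1/(r_2 - 1/(··· - 1/r_n)) with all r_i ≥ 2. Then the expansion is a palindrome: r_i = r_{n-i+1} for all 1 ≤ i ≤ n. -/

import Mathlib

/-- Negative (Hirzebruch–Jung) continued fraction: `negCF [r₁,…,rₙ] = r₁ - 1/(r₂ - 1/(⋯ - 1/rₙ))`
(with the convention `1/0 = 0` in `ℚ`, so `negCF [r] = r`). -/
def negCF : List ℤ → ℚ
  | [] => 0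
  | r :: l => (r : ℚ) - 1 / negCF l

/-- The matrix product `M(r₁) ⋯ M(rₙ)` with `M(r) = [[r,-1],[1,0]]`, as a 4-tuple
`(a, b, c, d)` representing `[[a, b], [c, d]]`. -/
def hjG : List ℤ → ℤ × ℤ × ℤ × ℤ
  | [] => (1, 0, 0, 1)
  | r :: l =>
    (r * (hjG l).1 - (hjG l).2.2.1, r * (hjG l).2.1 - (hjG l).2.2.2,
     (hjG l).1, (hjG l).2.1)

lemma hjG_inv (l : List ℤ) (hl : ∀ x ∈ l, 2 ≤ x) :
    1 ≤ (hjG l).1 ∧ (hjG l).2.2.1 + 1 ≤ (hjG l).1 ∧ 0 ≤ (hjG l).2.2.1 ∧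
    (hjG l).2.2.1 + (hjG l).2.2.2 ≤ (hjG l).1 + (hjG l).2.1 ∧
    1 ≤ (hjG l).2.2.1 + (hjG l).2.2.2 ∧
    (hjG l).1 * (hjG l).2.2.2 - (hjG l).2.1 * (hjG l).2.2.1 = 1 ∧
    (hjG l).2.1 ≤ (hjG l).2.2.2 ∧ (hjG l).2.1 ≤ 0 := by
  induction l with
  | nil => simp [hjG]
  | cons r l ih =>
    have hr : 2 ≤ r := hl r (by simp)
    obtain ⟨h1, h2, h3, h4, h5, h6, h7, h8⟩ := ih (fun x hx => hl x (by simp [hx]))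
    simp only [hjG]
    refine ⟨?_, ?_, ?_, ?_, ?_, ?_, ?_, ?_⟩
    · nlinarith
    · nlinarith
    · linarith
    · nlinarith
    · linarith
    · linear_combination h6
    · nlinarith
    · nlinarith

lemma hjG_b_neg : ∀ l : List ℤ, l ≠ [] → (∀ x ∈ l, 2 ≤ x) → (hjG l).2.1 ≤ -1 := by
  intro l
  induction l with
  | nil => simp
  | cons r t ih =>
    intro _ hl
    have hr : 2 ≤ r := hl r (by simp)
    have ht : ∀ x ∈ t, 2 ≤ x := fun x hx => hl x (by simp [hx])
    cases t with
    | nil => simp [hjG]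
    | cons s u =>
      have hbt := ih (by simp) ht
      have hinv := (hjG_inv (s :: u) ht).2.2.2.2.2.2.1
      have hstep : (hjG (r :: s :: u)).2.1
          = r * (hjG (s :: u)).2.1 - (hjG (s :: u)).2.2.2 := rfl
      rw [hstep]
      nlinarith [mul_nonpos_of_nonneg_of_nonpos (by linarith : (0:ℤ) ≤ r - 2)
        (by linarith : (hjG (s :: u)).2.1 ≤ 0)]

lemma hjG_c_pos (r : ℤ) (t : List ℤ) (hl : ∀ x ∈ r :: t, 2 ≤ x) :
    1 ≤ (hjG (r :: t)).2.2.1 := by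
  simp only [hjG]
  exact (hjG_inv t (fun x hx => hl x (by simp [hx]))).1

lemma negCF_eq (l : List ℤ) (hl : ∀ x ∈ l, 2 ≤ x) :
    negCF l = ((hjG l).1 : ℚ) / ((hjG l).2.2.1 : ℚ) := by
  induction l with
  | nil => simp [negCF, hjG]
  | cons r l ih =>
    have h1 : 1 ≤ (hjG l).1 := (hjG_inv l (fun x hx => hl x (by simp [hx]))).1
    have ha : ((hjG l).1 : ℚ) ≠ 0 := by exact_mod_cast (by omega : (hjG l).1 ≠ 0)
    rw [negCF, ih (fun x hx => hl x (by simp [hx])), one_div, inv_div]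
    simp only [hjG]
    push_cast
    field_simp

lemma hjG_append (l : List ℤ) (r : ℤ) :
    hjG (l ++ [r]) = ((hjG l).1 * r + (hjG l).2.1, -(hjG l).1,
      (hjG l).2.2.1 * r + (hjG l).2.2.2, -(hjG l).2.2.1) := by
  induction l with
  | nil => simp [hjG]
  | cons x l ih =>
    have hstep : hjG ((x :: l) ++ [r])
        = (x * (hjG (l ++ [r])).1 - (hjG (l ++ [r])).2.2.1,
           x * (hjG (l ++ [r])).2.1 - (hjG (l ++ [r])).2.2.2,
           (hjG (l ++ [r])).1, (hjG (l ++ [r])).2.1) := rfl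
    rw [hstep, ih]
    simp only [hjG, Prod.mk.injEq]
    exact ⟨by ring, by ring, trivial⟩

lemma hjG_reverse (l : List ℤ) :
    hjG l.reverse = ((hjG l).1, -(hjG l).2.2.1, -(hjG l).2.1, (hjG l).2.2.2) := by
  induction l with
  | nil => simp [hjG]
  | cons r l ih =>
    rw [List.reverse_cons, hjG_append, ih]
    simp only [hjG, Prod.mk.injEq]
    refine ⟨by ring, by simp [hjG], by ring, by ring⟩

lemma negCF_gt_one (l : List ℤ) (hne : l ≠ []) (hl : ∀ x ∈ l, 2 ≤ x) :
    1 < negCF l := by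
  obtain ⟨r, t, rfl⟩ : ∃ r t, l = r :: t := by
    cases l with
    | nil => exact absurd rfl hne
    | cons r t => exact ⟨r, t, rfl⟩
  rw [negCF_eq _ hl]
  have h2 := (hjG_inv (r :: t) hl).2.1
  have hc := hjG_c_pos r t hl
  rw [lt_div_iff₀ (by exact_mod_cast (by omega : (0:ℤ) < (hjG (r::t)).2.2.1))]
  have : (hjG (r::t)).2.2.1 < (hjG (r::t)).1 := by omega
  exact_mod_cast by simpa using this

lemma negCF_aux (t : List ℤ) (ht : ∀ x ∈ t, 2 ≤ x) :
    0 ≤ 1 / negCF t ∧ 1 / negCF t < 1 ∧ (1 / negCF t = 0 ↔ t = []) := by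
  cases t with
  | nil => simp [negCF]
  | cons r u =>
    have h := negCF_gt_one (r :: u) (by simp) ht
    have h0 : 0 < negCF (r :: u) := by linarith
    refine ⟨by positivity, ?_, ?_⟩
    · rw [div_lt_one h0]; linarith
    · simp only [div_eq_zero_iff, one_ne_zero, false_or]
      constructor
      · intro h'; exact absurd h' (by linarith)
      · intro h'; exact absurd h' (by simp)

lemma negCF_inj : ∀ l₁ l₂ : List ℤ, (∀ x ∈ l₁, 2 ≤ x) → (∀ x ∈ l₂, 2 ≤ x) →
    negCF l₁ = negCF l₂ → l₁ = l₂ := by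
  intro l₁
  induction l₁ with
  | nil =>
    intro l₂ _ h₂ he
    cases l₂ with
    | nil => rfl
    | cons s u =>
      have := negCF_gt_one (s :: u) (by simp) h₂
      rw [← he] at this
      simp [negCF] at this
      linarith
  | cons r t ih =>
    intro l₂ h₁ h₂ he
    cases l₂ with
    | nil =>
      have := negCF_gt_one (r :: t) (by simp) h₁
      rw [he] at this
      simp [negCF] at this
      linarith
    | cons s u =>
      have ht : ∀ x ∈ t, 2 ≤ x := fun x hx => h₁ x (by simp [hx])
      have hu : ∀ x ∈ u, 2 ≤ x := fun x hx => h₂ x (by simp [hx])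
      obtain ⟨ha1, ha2, ha3⟩ := negCF_aux t ht
      obtain ⟨hb1, hb2, hb3⟩ := negCF_aux u hu
      simp only [negCF] at he
      have hrs : r = s := by
        have h1 : (r : ℚ) - s = 1 / negCF t - 1 / negCF u := by linarith
        have h2 : (-1 : ℚ) < (r : ℚ) - s := by rw [h1]; linarith
        have h3 : ((r : ℚ) - s) < 1 := by rw [h1]; linarith
        have h2' : (-1 : ℤ) < r - s := by exact_mod_cast h2
        have h3' : r - s < (1 : ℤ) := by exact_mod_cast h3
        omega
      subst hrs
      have hv : 1 / negCF t = 1 / negCF u := by linarith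
      rcases eq_or_ne t [] with rfl | htne
      · have : 1 / negCF u = 0 := by rw [← hv]; simp [negCF]
        rw [hb3.mp this]
      · have hune : u ≠ [] := by
          intro h'; subst h'
          have : 1 / negCF t = 0 := by rw [hv]; simp [negCF]
          exact htne (ha3.mp this)
        have hgt := negCF_gt_one t htne ht
        have hgu := negCF_gt_one u hune hu
        have : negCF t = negCF u := by
          field_simp at hv
          exact hv.symm
        rw [ih u ht hu this]

/-- If `p > q > 0` are coprime with `q^2 ≡ 1 (mod p)`, then the negative continued
fraction expansion `p/q = [r₁,…,rₙ]` with all `rᵢ ≥ 2` is a palindrome. -/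
theorem hj_palindrome (p q : ℤ) (hpq : p > q) (hq : q > 0) (hcop : IsCoprime p q)
    (hsq : q ^ 2 ≡ 1 [ZMOD p]) (l : List ℤ) (hl : ∀ x ∈ l, 2 ≤ x)
    (hcf : (p : ℚ) / (q : ℚ) = negCF l) :
    l.reverse = l := by
  have hp : (0 : ℤ) < p := by linarith
  have hq0 : (q : ℚ) ≠ 0 := by exact_mod_cast (by omega : q ≠ 0)
  have hpos : (0 : ℚ) < (p : ℚ) / q := by positivity
  have hne : l ≠ [] := by
    rintro rfl
    rw [show negCF [] = 0 from rfl] at hcf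
    linarith
  obtain ⟨h1, h2, h3, h4, h5, h6, h7, h8⟩ := hjG_inv l hl
  set a := (hjG l).1 with hadef
  set b := (hjG l).2.1 with hbdef
  set c := (hjG l).2.2.1 with hcdef
  set d := (hjG l).2.2.2 with hddef
  have hc1 : 1 ≤ c := by
    obtain ⟨r, t, rfl⟩ : ∃ r t, l = r :: t := by
      cases l with
      | nil => exact absurd rfl hne
      | cons r t => exact ⟨r, t, rfl⟩
    exact hjG_c_pos r t hl
  have hb1 : b ≤ -1 := hjG_b_neg l hne hl
  have hc0 : ((c : ℚ)) ≠ 0 := by exact_mod_cast (by omega : c ≠ 0)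
  have hval : (p : ℚ) / q = (a : ℚ) / c := by rw [hcf, negCF_eq l hl]
  have hpc : p * c = a * q := by
    rw [div_eq_div_iff hq0 hc0] at hval
    exact_mod_cast hval
  have hcop_ac : IsCoprime a c := ⟨d, -b, by linarith⟩
  have hpa : p = a := by
    refine Int.dvd_antisymm (by omega) (by omega) ?_ ?_
    · exact hcop.dvd_of_dvd_mul_right ⟨c, hpc.symm⟩
    · exact hcop_ac.dvd_of_dvd_mul_right ⟨q, by linarith⟩
  have hqc : q = c := by
    have : p * c = p * q := by rw [hpc, hpa]
    exact (mul_left_cancel₀ (by omega) this).symm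
  -- From the determinant: (-b) * q ≡ 1 mod p; with q² ≡ 1 get b = -q.
  have hdet : p * d - b * q = 1 := by rw [hpa, hqc]; exact h6
  have hdvd1 : p ∣ 1 - q ^ 2 := Int.ModEq.dvd hsq
  have hdvd2 : p ∣ 1 + b * q := ⟨d, by linarith⟩
  have hdvd3 : p ∣ q * (b + q) := by
    have : q * (b + q) = (1 + b * q) - (1 - q ^ 2) := by ring
    rw [this]
    exact dvd_sub hdvd2 hdvd1
  have hdvd4 : p ∣ b + q := hcop.dvd_of_dvd_mul_left hdvd3
  have hbq : b + q = 0 := by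
    obtain ⟨k, hk⟩ := hdvd4
    have hblow : 1 - a ≤ b := by omega
    have hbup : b + q < p := by omega
    have hbdn : -p < b + q := by omega
    rcases lt_trichotomy k 0 with hk0 | hk0 | hk0
    · exfalso; nlinarith
    · rw [hk, hk0, mul_zero]
    · exfalso; nlinarith
  -- Now compute negCF of the reversed list.
  have hrl : ∀ x ∈ l.reverse, 2 ≤ x := fun x hx => hl x (List.mem_reverse.mp hx)
  have hrev : negCF l.reverse = negCF l := by
    rw [negCF_eq l.reverse hrl, negCF_eq l hl, hjG_reverse l]
    have hbc : ((-(hjG l).2.1 : ℤ) : ℚ) = ((hjG l).2.2.1 : ℚ) := by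
      exact_mod_cast (by omega : -b = c)
    show ((hjG l).1 : ℚ) / ((-(hjG l).2.1 : ℤ) : ℚ) = _
    rw [hbc]
  exact negCF_inj l.reverse l hrl hl hrev
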